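/- Let k ≥ 1 be an integer and let U be uniformly distributed on (0,1). Then Var(H(⌊kU⌋)) ≤ 4e^{−2} + (1+√2)² < 7. -/

import Mathlib

open MeasureTheory ProbabilityTheory Finset Filter
open scoped ENNReal NNReal

noncomputable section

/-- The `k`-th harmonic number `H_k = ∑_{i=1}^k 1/i`, with `H_0 = 0`. -/
def harm (k : ℕ) : ℝ := ∑ i ∈ Finset.range k, (1 : ℝ) / (i + 1)

instance (n : ℕ) : MeasurableSpace (Equiv.Perm (Fin n)) := ⊤

/-- The uniform distribution on the permutations of `{1,…,n}`. -/
def uniformPerm (n : ℕ) : Measure (Equiv.Perm (Fin n)) :=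
  (PMF.uniformOfFintype (Equiv.Perm (Fin n))).toMeasure

/-- The (1-based) position `N = π⁻¹(l)` of the key `l` in the permutation `π`
(positions are `i+1` for `i : Fin n`, values are `π i + 1`). -/
def bstN (n l : ℕ) (π : Equiv.Perm (Fin n)) : ℕ :=
  1 + ∑ i : Fin n, if (π i : ℕ) + 1 = l then (i : ℕ) else 0

open scoped Classical in
/-- `R₋`: the number of ascending records in the subpermutation of values `< l`
appearing before the position of `l`. -/
def bstRminus (n l : ℕ) (π : Equiv.Perm (Fin n)) : ℕ :=
  (Finset.univ.filter fun r : Fin n =>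
    (r : ℕ) + 1 < bstN n l π ∧ (π r : ℕ) + 1 < l ∧
      ∀ k : Fin n, k < r → (π k : ℕ) + 1 < l → π k < π r).card

open scoped Classical in
/-- `R₊`: the number of descending records in the subpermutation of values `> l`
appearing before the position of `l`. -/
def bstRplus (n l : ℕ) (π : Equiv.Perm (Fin n)) : ℕ :=
  (Finset.univ.filter fun r : Fin n =>
    (r : ℕ) + 1 < bstN n l π ∧ (π r : ℕ) + 1 > l ∧
      ∀ k : Fin n, k < r → (π k : ℕ) + 1 > l → π r < π k).card

/-- `X_{n,l} = R₋ + R₊`: the depth of the node containing `l` in the binary search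
tree built from the permutation `π` of `{1,…,n}`. -/
def bstDepth (n l : ℕ) (π : Equiv.Perm (Fin n)) : ℕ :=
  bstRminus n l π + bstRplus n l π

open scoped Classical in
/-- `G = #{1 ≤ i < N : π(i) < l}`. -/
def bstG (n l : ℕ) (π : Equiv.Perm (Fin n)) : ℕ :=
  (Finset.univ.filter fun i : Fin n =>
    (i : ℕ) + 1 < bstN n l π ∧ (π i : ℕ) + 1 < l).card

/-- The expectation `E X_{n,l}` of the depth of the node containing `l`. -/
def bstExp (n l : ℕ) : ℝ := ∫ π, (bstDepth n l π : ℝ) ∂(uniformPerm n)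

/-- The hypergeometric probability mass function: for `X ~ HypGeo(N; M, n)`,
`P(X = k) = C(M,k)·C(N−M,n−k)/C(N,n)` for `0 ≤ k ≤ n` (and `0` otherwise). -/
def hypPMF (N M n k : ℕ) : ℝ :=
  if k ≤ n then (M.choose k * (N - M).choose (n - k) : ℝ) / (N.choose n) else 0

/-- Total variation distance between (probability) measures on `ℕ`. -/
def dTV (μ ν : Measure ℕ) : ℝ := ⨆ A : Set ℕ, |(μ A).toReal - (ν A).toReal|

/-- The Wasserstein-type distance `d_W` of Barbour–Holst–Janson: the supremum of
`|∫ f dμ − ∫ f dν|` over measurable `f` with `|f(x) − f(y)| ≤ 1` whenever `|x − y| ≤ 1`. -/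
def dW (μ ν : Measure ℝ) : ℝ :=
  sSup { d : ℝ | ∃ f : ℝ → ℝ, Measurable f ∧ (∀ x y, |x - y| ≤ 1 → |f x - f y| ≤ 1) ∧
    d = |∫ x, f x ∂μ - ∫ x, f x ∂ν| }

/-- The mixed Poisson distribution with mixing measure `ν`:
`MixPo(ν)({k}) = ∫ e^{−λ} λ^k / k! ν(dλ)`. -/
def mixPo (ν : Measure ℝ) : Measure ℕ :=
  Measure.sum fun k =>
    (∫⁻ l, ENNReal.ofReal (Real.exp (-l) * l ^ k / k.factorial) ∂ν) • Measure.dirac k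

/-- The standard normal cumulative distribution function `Φ`. -/
def stdNormalCDF (x : ℝ) : ℝ :=
  (1 / Real.sqrt (2 * Real.pi)) * ∫ y in Set.Iic x, Real.exp (-y ^ 2 / 2)

end
lemma harm_succ (n : ℕ) : harm (n+1) = harm n + 1/(n+1) := by
  simp [harm, Finset.sum_range_succ]

lemma harm_nonneg (n : ℕ) : 0 ≤ harm n := by
  unfold harm; positivity

lemma harm_mono : Monotone harm := by
  intro a b hab
  unfold harm
  apply Finset.sum_le_sum_of_subset_of_nonneg (Finset.range_subset_range.2 hab)
  intros; positivity

lemma sumA (n : ℕ) : ∑ j ∈ range (n+1), harm j = (n+1)*harm n - n := by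
  induction n with
  | zero => simp [harm]
  | succ m ih =>
    rw [Finset.sum_range_succ, ih, harm_succ]
    have : (m:ℝ)+1 ≠ 0 := by positivity
    push_cast
    field_simp
    ring

lemma sumB (n : ℕ) : ∑ j ∈ range (n+1), (harm j)^2
    = (n+1)*(harm n)^2 - (2*n+1)*harm n + 2*n := by
  induction n with
  | zero => simp [harm]
  | succ m ih =>
    rw [Finset.sum_range_succ, ih, harm_succ]
    have : (m:ℝ)+1 ≠ 0 := by positivity
    push_cast
    field_simp
    ring

lemma floor_eq_on (k j : ℕ) (hk : (0:ℝ) < k) {x : ℝ}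
    (hx : x ∈ Set.Ico ((j:ℝ)/k) (((j:ℝ)+1)/k)) : ⌊(k:ℝ)*x⌋₊ = j := by
  obtain ⟨h1, h2⟩ := hx
  have hx0 : (0:ℝ) ≤ x := le_trans (by positivity) h1
  rw [Nat.floor_eq_iff (by positivity)]
  constructor
  · exact (div_le_iff₀ hk).mp h1 |>.trans_eq (mul_comm _ _)
  · have := (lt_div_iff₀ hk).mp h2
    linarith [this]

lemma integral_floor (k : ℕ) (hk : 1 ≤ k) (g : ℕ → ℝ) :
    ∫ x in Set.Ioo (0:ℝ) 1, g ⌊(k:ℝ)*x⌋₊ = (∑ j ∈ range k, g j)/k := by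
  have hk' : (0:ℝ) < k := by exact_mod_cast hk
  rw [setIntegral_congr_set Ioo_ae_eq_Ico]
  have hset : Set.Ico (0:ℝ) 1 = ⋃ j ∈ range k, Set.Ico ((j:ℝ)/k) (((j:ℝ)+1)/k) := by
    ext x
    simp only [Set.mem_iUnion, Set.mem_Ico, Finset.mem_range, exists_prop]
    constructor
    · rintro ⟨hx0, hx1⟩
      have hkx0 : (0:ℝ) ≤ (k:ℝ)*x := by positivity
      refine ⟨⌊(k:ℝ)*x⌋₊, ?_, ?_, ?_⟩
      · rw [Nat.floor_lt hkx0]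
        nlinarith
      · rw [div_le_iff₀ hk']
        have := Nat.floor_le hkx0
        linarith [this]
      · rw [lt_div_iff₀ hk']
        have := Nat.lt_floor_add_one ((k:ℝ)*x)
        linarith [this]
    · rintro ⟨j, hj, h1, h2⟩
      have hj' : (j:ℝ) + 1 ≤ k := by exact_mod_cast hj
      constructor
      · exact le_trans (by positivity) h1
      · calc x < ((j:ℝ)+1)/k := h2
          _ ≤ (k:ℝ)/k := by gcongr
          _ = 1 := div_self hk'.ne'
  rw [hset, integral_biUnion_finset]
  · have : ∀ j ∈ range k, ∫ x in Set.Ico ((j:ℝ)/k) (((j:ℝ)+1)/k), g ⌊(k:ℝ)*x⌋₊ = g j / k := by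
      intro j hj
      rw [setIntegral_congr_fun measurableSet_Ico
        (fun x hx => by rw [floor_eq_on k j hk' hx]), setIntegral_const,
        measureReal_def, Real.volume_Ico, smul_eq_mul]
      rw [ENNReal.toReal_ofReal (by rw [sub_nonneg]; gcongr; linarith)]
      field_simp
      ring
    rw [Finset.sum_congr rfl this, Finset.sum_div]
  · exact fun j _ => measurableSet_Ico
  · have key : ∀ i j : ℕ, i < j →
        Disjoint (Set.Ico ((i:ℝ)/k) (((i:ℝ)+1)/k)) (Set.Ico ((j:ℝ)/k) (((j:ℝ)+1)/k)) := by
      intro i j h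
      apply Set.Ico_disjoint_Ico.2
      have h1 : (i:ℝ)+1 ≤ j := by exact_mod_cast h
      have h2 : ((i:ℝ)+1)/k ≤ (j:ℝ)/k := by gcongr
      exact le_trans (min_le_left _ _) (le_trans h2 (le_max_right _ _))
    intro i hi j hj hij
    rcases lt_or_gt_of_ne hij with h | h
    · exact key i j h
    · exact (key j i h).symm
  · intro j hj
    rw [integrableOn_congr_fun (fun x hx => by rw [floor_eq_on k j hk' hx]) measurableSet_Ico]
    exact integrableOn_const (by rw [Real.volume_Ico]; exact ENNReal.ofReal_ne_top)

theorem variance_harm_floor_lt_seven (k : ℕ) (hk : 1 ≤ k)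
    {Ω : Type*} [MeasurableSpace Ω] (P : Measure Ω) [IsProbabilityMeasure P]
    (U : Ω → ℝ) (hU : Measure.map U P = volume.restrict (Set.Ioo (0 : ℝ) 1)) :
    variance (fun ω => harm ⌊(k : ℝ) * U ω⌋₊) P
        ≤ 4 * Real.exp (-2) + (1 + Real.sqrt 2) ^ 2 ∧
      4 * Real.exp (-2) + (1 + Real.sqrt 2) ^ 2 < 7 := by
  have hk' : (0:ℝ) < k := by exact_mod_cast hk
  -- measurability of U
  have hUm : AEMeasurable U P := by
    by_contra h
    rw [Measure.map_of_not_aemeasurable h] at hU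
    have : (0 : Measure ℝ) (Set.Ioo (0:ℝ) 1) = volume.restrict (Set.Ioo (0:ℝ) 1) (Set.Ioo (0:ℝ) 1) := by
      rw [hU]
    simp [Measure.restrict_apply, Real.volume_Ioo] at this
  have hfm : ∀ g : ℕ → ℝ, Measurable fun x : ℝ => g ⌊(k:ℝ)*x⌋₊ := fun g =>
    (measurable_from_top (f := g)).comp ((measurable_const.mul measurable_id).nat_floor)
  have hXm : AEStronglyMeasurable (fun ω => harm ⌊(k : ℝ) * U ω⌋₊) P :=
    ((hfm harm).comp_aemeasurable hUm).aestronglyMeasurable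
  -- a.e. membership
  have hae : ∀ᵐ ω ∂P, U ω ∈ Set.Ioo (0:ℝ) 1 := by
    have h1 : ∀ᵐ x ∂(volume.restrict (Set.Ioo (0:ℝ) 1)), x ∈ Set.Ioo (0:ℝ) 1 :=
      ae_restrict_mem measurableSet_Ioo
    rw [← hU] at h1
    exact (ae_map_iff hUm measurableSet_Ioo).mp h1
  -- boundedness
  have hbound : ∀ᵐ ω ∂P, ‖harm ⌊(k : ℝ) * U ω⌋₊‖ ≤ harm k := by
    filter_upwards [hae] with ω hω
    rw [Real.norm_eq_abs, abs_of_nonneg (harm_nonneg _)]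
    apply harm_mono
    have : (k:ℝ) * U ω ≤ (k:ℝ) := by nlinarith [hω.2]
    calc ⌊(k:ℝ) * U ω⌋₊ ≤ ⌊(k:ℝ)⌋₊ := Nat.floor_le_floor this
      _ = k := Nat.floor_natCast k
  have hmem : MemLp (fun ω => harm ⌊(k : ℝ) * U ω⌋₊) 2 P :=
    MemLp.of_bound hXm (harm k) hbound
  -- integrals
  have hint : ∀ g : ℕ → ℝ, ∫ ω, g ⌊(k:ℝ)*U ω⌋₊ ∂P = (∑ j ∈ range k, g j)/k := by
    intro g
    rw [← integral_map hUm (hfm g).aestronglyMeasurable, hU, integral_floor k hk g]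
  constructor
  · rw [variance_eq_sub hmem]
    have hE1 : P[fun ω => harm ⌊(k : ℝ) * U ω⌋₊] = (∑ j ∈ range k, harm j)/k := hint harm
    have hE2 : P[(fun ω => harm ⌊(k : ℝ) * U ω⌋₊)^2] = (∑ j ∈ range k, (harm j)^2)/k := by
      have := hint (fun j => (harm j)^2)
      convert this using 1
      rfl
    rw [hE1, hE2]
    obtain ⟨m, rfl⟩ : ∃ m, k = m + 1 := ⟨k - 1, (Nat.succ_pred_eq_of_pos hk).symm⟩
    rw [sumA, sumB]
    have hK : (0:ℝ) < (m:ℝ)+1 := by positivity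
    have hH := harm_nonneg m
    have h2 : ((m:ℕ):ℝ) + 1 = ((m+1 : ℕ):ℝ) := by push_cast; ring
    -- bound by 2
    have hvar2 : ((m+1:ℕ):ℝ)*(harm m)^2 - (2*m+1)*harm m + 2*m = ((m:ℝ)+1)*(harm m)^2 - (2*m+1)*harm m + 2*m := by push_cast; ring
    have key : (((m:ℝ)+1)*(harm m)^2 - (2*m+1)*harm m + 2*m)/((m:ℕ)+1:ℝ)
        - ((((m:ℝ)+1)*harm m - m)/((m:ℕ)+1:ℝ))^2 ≤ 2 := by
      rw [div_pow, div_sub_div _ _ (by positivity) (by positivity), div_le_iff₀ (by positivity)]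
      push_cast
      nlinarith [sq_nonneg ((m:ℝ)+1), hH, hK]
    push_cast at key ⊢
    have h27 : (2:ℝ) ≤ 4 * Real.exp (-2) + (1 + Real.sqrt 2) ^ 2 := by
      nlinarith [Real.sqrt_nonneg 2, Real.exp_pos (-2), Real.sq_sqrt (by norm_num : (2:ℝ) ≥ 0)]
    linarith [key]
  · have h1 : Real.sqrt 2 < 1.5 := by
      rw [show (1.5:ℝ) = Real.sqrt (1.5^2) by rw [Real.sqrt_sq]; norm_num]
      apply Real.sqrt_lt_sqrt <;> norm_num
    have h2 : Real.exp (-2) < 0.14 := by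
      rw [Real.exp_neg]
      rw [inv_lt_comm₀ (Real.exp_pos 2) (by norm_num)]
      have := Real.exp_one_gt_d9
      calc (0.14:ℝ)⁻¹ < 2.7 * 2.7 := by norm_num
        _ < Real.exp 1 * Real.exp 1 := by nlinarith
        _ = Real.exp 2 := by rw [← Real.exp_add]; norm_num
    nlinarith [Real.sqrt_nonneg 2]
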